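/- Let G = (V,E) be a non-bipartite graph and let H be the join of two disjoint copies of G (all edges between the copies added). Then cd₂(H) = 2(|V| - α(G)), the minimum number of vertices of H to delete to leave an induced bipartite graph equals twice the vertex cover number of G. -/

import Mathlib

open Finset

/-- `cd₂(G)` for a graph: the minimum number of vertices whose deletion leaves
an induced bipartite subgraph. -/
noncomputable def cd2Graph {V : Type*} [Fintype V] [DecidableEq V] (G : SimpleGraph V) : ℕ :=
  sInf {k | ∃ U : Finset V, U.card = k ∧ ∃ c : V → Bool,
    ∀ u v : V, G.Adj u v → u ∉ U → v ∉ U → c u ≠ c v}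

/-- The independence number `α(G)`: the maximum size of an independent set. -/
noncomputable def indepNum {V : Type*} [Fintype V] [DecidableEq V] (G : SimpleGraph V) : ℕ :=
  sSup {k | ∃ S : Finset V, S.card = k ∧ ∀ u ∈ S, ∀ v ∈ S, ¬ G.Adj u v}

/-- The join of two disjoint copies of `G`: the disjoint union of two copies of
`G` with all edges between the two copies added. -/
def doubleJoin {V : Type*} (G : SimpleGraph V) : SimpleGraph (V ⊕ V) where
  Adj a b :=
    match a, b with
    | Sum.inl u, Sum.inl v => G.Adj u v
    | Sum.inr u, Sum.inr v => G.Adj u v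
    | Sum.inl _, Sum.inr _ => True
    | Sum.inr _, Sum.inl _ => True
  symm := ⟨by
    intro a b h
    cases a <;> cases b <;> first | exact G.adj_symm h | trivial⟩
  loopless := ⟨by
    intro a h
    cases a <;> exact G.irrefl h⟩

lemma indep_card_le {V : Type*} [Fintype V] [DecidableEq V] (G : SimpleGraph V)
    (S : Finset V) (hS : ∀ u ∈ S, ∀ v ∈ S, ¬ G.Adj u v) : S.card ≤ indepNum G := by
  apply le_csSup
  · refine ⟨Fintype.card V, fun k hk => ?_⟩
    obtain ⟨T, hT, _⟩ := hk
    simpa [← hT] using T.card_le_univ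
  · exact ⟨S, rfl, hS⟩

lemma exists_max_indep {V : Type*} [Fintype V] [DecidableEq V] (G : SimpleGraph V) :
    ∃ S : Finset V, S.card = indepNum G ∧ ∀ u ∈ S, ∀ v ∈ S, ¬ G.Adj u v := by
  have h := Nat.sSup_mem (s := {k | ∃ S : Finset V, S.card = k ∧ ∀ u ∈ S, ∀ v ∈ S, ¬ G.Adj u v})
    ⟨0, ∅, by simp⟩
    ⟨Fintype.card V, fun k hk => by
      obtain ⟨T, hT, _⟩ := hk
      simpa [← hT] using T.card_le_univ⟩
  obtain ⟨S, hS, hind⟩ := h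
  exact ⟨S, hS, hind⟩

lemma two_color_bound {V : Type*} [Fintype V] [DecidableEq V] (G : SimpleGraph V)
    (T : Finset V) (c : V → Bool)
    (h : ∀ u ∈ T, ∀ v ∈ T, G.Adj u v → c u ≠ c v) : T.card ≤ 2 * indepNum G := by
  have hsplit : T = T.filter (fun v => c v = false) ∪ T.filter (fun v => c v = true) := by
    ext v
    simp only [Finset.mem_union, Finset.mem_filter]
    cases h : c v <;> tauto
  have hd : Disjoint (T.filter (fun v => c v = false)) (T.filter (fun v => c v = true)) := by
    simp [Finset.disjoint_filter]
  have h1 : (T.filter (fun v => c v = false)).card ≤ indepNum G := by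
    apply indep_card_le
    intro u hu v hv hadj
    simp only [Finset.mem_filter] at hu hv
    exact h u hu.1 v hv.1 hadj (by rw [hu.2, hv.2])
  have h2 : (T.filter (fun v => c v = true)).card ≤ indepNum G := by
    apply indep_card_le
    intro u hu v hv hadj
    simp only [Finset.mem_filter] at hu hv
    exact h u hu.1 v hv.1 hadj (by rw [hu.2, hv.2])
  have hle : T.card ≤ (T.filter (fun v => c v = false)).card +
      (T.filter (fun v => c v = true)).card := by
    rw [← Finset.card_union_of_disjoint hd, ← hsplit]
  omega

/-- If `G` is non-bipartite and `H` is the join of two disjoint copies of `G`,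
then `cd₂(H) = 2(|V| - α(G))`: the minimum number of vertices of `H` whose
deletion leaves an induced bipartite graph equals twice the vertex cover number
of `G`. -/
theorem cd2_doubleJoin {V : Type*} [Fintype V] [DecidableEq V]
    (G : SimpleGraph V)
    (hnb : ∀ c : V → Bool, ∃ u v : V, G.Adj u v ∧ c u = c v) :
    cd2Graph (doubleJoin G) = 2 * (Fintype.card V - indepNum G) := by
  classical
  obtain ⟨S, hScard, hSind⟩ := exists_max_indep G
  have hαle : indepNum G ≤ Fintype.card V := by
    rw [← hScard]; simpa using S.card_le_univ
  -- membership: 2(n-α) is achievable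
  have hmem : 2 * (Fintype.card V - indepNum G) ∈
      {k | ∃ U : Finset (V ⊕ V), U.card = k ∧ ∃ c : V ⊕ V → Bool,
        ∀ u v : V ⊕ V, (doubleJoin G).Adj u v → u ∉ U → v ∉ U → c u ≠ c v} := by
    refine ⟨Sᶜ.image Sum.inl ∪ Sᶜ.image Sum.inr, ?_, Sum.elim (fun _ => false) (fun _ => true), ?_⟩
    · rw [Finset.card_union_of_disjoint (by
        simp only [Finset.disjoint_left, Finset.mem_image]
        rintro x ⟨a, -, rfl⟩ ⟨b, -, h⟩
        exact Sum.inl_ne_inr h.symm)]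
      rw [Finset.card_image_of_injective _ Sum.inl_injective,
        Finset.card_image_of_injective _ Sum.inr_injective,
        Finset.card_compl, hScard]
      ring
    · rintro (u | u) (v | v) hadj hu hv
      · exfalso
        simp only [Finset.mem_union, Finset.mem_image, Finset.mem_compl] at hu hv
        push_neg at hu hv
        have hu' : u ∈ S := by
          by_contra h
          exact hu.1 u h rfl
        have hv' : v ∈ S := by
          by_contra h
          exact hv.1 v h rfl
        exact hSind u hu' v hv' hadj
      · simp
      · simp
      · exfalso
        simp only [Finset.mem_union, Finset.mem_image, Finset.mem_compl] at hu hv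
        push_neg at hu hv
        have hu' : u ∈ S := by
          by_contra h
          exact hu.2 u h rfl
        have hv' : v ∈ S := by
          by_contra h
          exact hv.2 v h rfl
        exact hSind u hu' v hv' hadj
  refine le_antisymm (Nat.sInf_le hmem) (le_csInf ⟨_, hmem⟩ ?_)
  rintro k ⟨U, rfl, c, hc⟩
  set n := Fintype.card V with hn
  set U₁ : Finset V := Finset.univ.filter (fun v => Sum.inl v ∈ U) with hU₁
  set U₂ : Finset V := Finset.univ.filter (fun v => Sum.inr v ∈ U) with hU₂
  have hUcard : U.card = U₁.card + U₂.card := by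
    have : U = U₁.image Sum.inl ∪ U₂.image Sum.inr := by
      ext x
      rcases x with u | u <;>
        simp [hU₁, hU₂, Finset.mem_union, Finset.mem_image]
    rw [this, Finset.card_union_of_disjoint (by
      simp only [Finset.disjoint_left, Finset.mem_image]
      rintro x ⟨a, -, rfl⟩ ⟨b, -, h⟩
      exact Sum.inl_ne_inr h.symm),
      Finset.card_image_of_injective _ Sum.inl_injective,
      Finset.card_image_of_injective _ Sum.inr_injective]
  have hc1 : U₁ᶜ.card = n - U₁.card := by rw [Finset.card_compl]
  have hc2 : U₂ᶜ.card = n - U₂.card := by rw [Finset.card_compl]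
  have hU1le : U₁.card ≤ n := by simpa using U₁.card_le_univ
  have hU2le : U₂.card ≤ n := by simpa using U₂.card_le_univ
  have hboolne : ∀ x y z : Bool, x ≠ z → y ≠ z → x = y := by decide
  rcases Finset.eq_empty_or_nonempty U₁ᶜ with h1 | h1
  · -- left side fully deleted
    have hU1 : U₁.card = n := by
      have := hc1; rw [h1] at this; simp at this; omega
    have hright : U₂ᶜ.card ≤ 2 * indepNum G := by
      apply two_color_bound G _ (fun v => c (Sum.inr v))
      intro u hu v hv hadj
      simp only [Finset.mem_compl, hU₂, Finset.mem_filter, Finset.mem_univ, true_and] at hu hv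
      exact hc (Sum.inr u) (Sum.inr v) hadj hu hv
    omega
  · rcases Finset.eq_empty_or_nonempty U₂ᶜ with h2 | h2
    · -- right side fully deleted
      have hU2 : U₂.card = n := by
        have := hc2; rw [h2] at this; simp at this; omega
      have hleft : U₁ᶜ.card ≤ 2 * indepNum G := by
        apply two_color_bound G _ (fun v => c (Sum.inl v))
        intro u hu v hv hadj
        simp only [Finset.mem_compl, hU₁, Finset.mem_filter, Finset.mem_univ, true_and] at hu hv
        exact hc (Sum.inl u) (Sum.inl v) hadj hu hv
      omega
    · -- both sides have remaining vertices
      obtain ⟨a, ha⟩ := h2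
      have ha' : Sum.inr a ∉ U := by
        simpa [hU₂] using Finset.mem_compl.mp ha
      obtain ⟨b, hb⟩ := h1
      have hb' : Sum.inl b ∉ U := by
        simpa [hU₁] using Finset.mem_compl.mp hb
      have hind1 : U₁ᶜ.card ≤ indepNum G := by
        apply indep_card_le
        intro u hu v hv hadj
        simp only [Finset.mem_compl, hU₁, Finset.mem_filter, Finset.mem_univ, true_and] at hu hv
        have e1 : c (Sum.inl u) ≠ c (Sum.inr a) := hc _ _ trivial hu ha'
        have e2 : c (Sum.inl v) ≠ c (Sum.inr a) := hc _ _ trivial hv ha'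
        exact hc (Sum.inl u) (Sum.inl v) hadj hu hv (hboolne _ _ _ e1 e2)
      have hind2 : U₂ᶜ.card ≤ indepNum G := by
        apply indep_card_le
        intro u hu v hv hadj
        simp only [Finset.mem_compl, hU₂, Finset.mem_filter, Finset.mem_univ, true_and] at hu hv
        have e1 : c (Sum.inr u) ≠ c (Sum.inl b) := hc _ _ trivial hu hb'
        have e2 : c (Sum.inr v) ≠ c (Sum.inl b) := hc _ _ trivial hv hb'
        exact hc (Sum.inr u) (Sum.inr v) hadj hu hv (hboolne _ _ _ e1 e2)
      omega
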